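/- Let A ∈ SU(1,1) with eigenvalues e^{iρ} and e^{-iρ} for some real ρ ≠ 0, and let P ∈ SU(1,1) satisfy P A P⁻¹ = diag(e^{iρ}, e^{-iρ}). Let W = [[iu, w], [conj(w), -iu]] ∈ su(1,1) with u ∈ ℝ, w ∈ ℂ, and write P W P⁻¹ = [[iu₊, w₊], [conj(w₊), -iu₊]]. Then |w₊| ≥ (1/2)·|ρ|⁻¹·‖P‖⁻²·‖A W - W A‖. -/

import Mathlib

set_option synthInstance.maxHeartbeats 1000000
set_option maxHeartbeats 1000000

open Complex Matrix

/-- Operator norm of a `2×2` complex matrix acting on `ℓ²`. -/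
noncomputable def opNorm2 (P : Matrix (Fin 2) (Fin 2) ℂ) : ℝ :=
  ‖(Matrix.toEuclideanCLM (𝕜 := ℂ) (n := Fin 2) P :
      EuclideanSpace ℂ (Fin 2) →L[ℂ] EuclideanSpace ℂ (Fin 2))‖

private lemma opNorm2_mul_le (X Y : Matrix (Fin 2) (Fin 2) ℂ) :
    opNorm2 (X * Y) ≤ opNorm2 X * opNorm2 Y := by
  unfold opNorm2; rw [_root_.map_mul]; exact norm_mul_le _ _

private lemma opNorm2_smul (c : ℂ) (X : Matrix (Fin 2) (Fin 2) ℂ) :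
    opNorm2 (c • X) = ‖c‖ * opNorm2 X := by
  unfold opNorm2
  rw [map_smul (Matrix.toEuclideanCLM (𝕜 := ℂ) (n := Fin 2)), norm_smul]

private lemma opNorm2_one : opNorm2 1 = 1 := by
  unfold opNorm2; rw [_root_.map_one]; exact norm_one

private lemma opNorm2_nonneg (X : Matrix (Fin 2) (Fin 2) ℂ) : 0 ≤ opNorm2 X :=
  norm_nonneg _

private lemma opNorm2_cstar (X : Matrix (Fin 2) (Fin 2) ℂ) :
    opNorm2 X * opNorm2 X = opNorm2 (Xᴴ * X) := by
  unfold opNorm2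
  rw [_root_.map_mul, ← CStarRing.norm_star_mul_self (x := Matrix.toEuclideanCLM (𝕜 := ℂ) X),
    ← map_star (Matrix.toEuclideanCLM (𝕜 := ℂ) (n := Fin 2)) X, Matrix.star_eq_conjTranspose]

private lemma opNorm2_conjTranspose (X : Matrix (Fin 2) (Fin 2) ℂ) :
    opNorm2 Xᴴ = opNorm2 X := by
  unfold opNorm2
  rw [← Matrix.star_eq_conjTranspose,
    map_star (Matrix.toEuclideanCLM (𝕜 := ℂ) (n := Fin 2)) X,
    ContinuousLinearMap.star_eq_adjoint]
  exact LinearIsometryEquiv.norm_map ContinuousLinearMap.adjoint _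

theorem conjugated_offdiagonal_lower_bound
    (a b p q : ℂ) (ρ : ℝ) (hρ : ρ ≠ 0)
    (A P : Matrix (Fin 2) (Fin 2) ℂ)
    (hA : A = !![a, b; (starRingEnd ℂ) b, (starRingEnd ℂ) a])
    (hAsu : ‖a‖ ^ 2 - ‖b‖ ^ 2 = 1)
    (hP : P = !![p, q; (starRingEnd ℂ) q, (starRingEnd ℂ) p])
    (hPsu : ‖p‖ ^ 2 - ‖q‖ ^ 2 = 1)
    (hdiag : P * A * P⁻¹ =
      !![Complex.exp (Complex.I * ρ), 0; 0, Complex.exp (-(Complex.I * ρ))])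
    (u : ℝ) (w : ℂ) (W : Matrix (Fin 2) (Fin 2) ℂ)
    (hW : W = !![Complex.I * (u : ℂ), w; (starRingEnd ℂ) w, -(Complex.I * (u : ℂ))])
    (uP : ℝ) (wP : ℂ)
    (hWP : P * W * P⁻¹ =
      !![Complex.I * (uP : ℂ), wP; (starRingEnd ℂ) wP, -(Complex.I * (uP : ℂ))]) :
    ‖wP‖ ≥
      (1 / 2) * |ρ|⁻¹ * ((opNorm2 P) ^ 2)⁻¹ * opNorm2 (A * W - W * A) := by
  have hnsq : Complex.normSq p - Complex.normSq q = 1 := by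
    rw [← Complex.sq_norm, ← Complex.sq_norm]; exact hPsu
  have hdet : P.det = 1 := by
    rw [hP, Matrix.det_fin_two_of, Complex.mul_conj, Complex.mul_conj,
      ← Complex.ofReal_sub, hnsq, Complex.ofReal_one]
  have hdet' : IsUnit P.det := by rw [hdet]; exact isUnit_one
  have h1 : P⁻¹ * P = 1 := Matrix.nonsing_inv_mul P hdet'
  have h2 : P * P⁻¹ = 1 := Matrix.mul_nonsing_inv P hdet'
  set D : Matrix (Fin 2) (Fin 2) ℂ :=
    !![Complex.exp (Complex.I * ρ), 0; 0, Complex.exp (-(Complex.I * ρ))] with hD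
  set V : Matrix (Fin 2) (Fin 2) ℂ :=
    !![Complex.I * (uP : ℂ), wP; (starRingEnd ℂ) wP, -(Complex.I * (uP : ℂ))] with hV
  set c : ℂ := Complex.exp (Complex.I * ρ) - Complex.exp (-(Complex.I * ρ)) with hc
  set N : Matrix (Fin 2) (Fin 2) ℂ := !![0, wP; -((starRingEnd ℂ) wP), 0] with hN
  -- conjugation identity
  have hconj : ∀ X Y : Matrix (Fin 2) (Fin 2) ℂ,
      P * (X * Y) * P⁻¹ = (P * X * P⁻¹) * (P * Y * P⁻¹) := by
    intro X Y
    calc P * (X * Y) * P⁻¹ = P * X * (P⁻¹ * P) * Y * P⁻¹ := by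
          rw [h1]; simp [Matrix.mul_assoc]
      _ = (P * X * P⁻¹) * (P * Y * P⁻¹) := by simp [Matrix.mul_assoc]
  have hkey : P * (A * W - W * A) * P⁻¹ = D * V - V * D := by
    rw [Matrix.mul_sub, Matrix.sub_mul, hconj, hconj, hdiag, hWP]
  have hM : A * W - W * A = P⁻¹ * (D * V - V * D) * P := by
    rw [← hkey]
    calc A * W - W * A = (P⁻¹ * P) * (A * W - W * A) * (P⁻¹ * P) := by
          rw [h1]; simp
      _ = P⁻¹ * (P * (A * W - W * A) * P⁻¹) * P := by simp [Matrix.mul_assoc]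
  -- commutator with diagonal matrix
  have hDV : D * V - V * D = c • N := by
    ext i j
    fin_cases i <;> fin_cases j <;>
      simp [hD, hV, hN, hc, Matrix.mul_apply, Fin.sum_univ_two] <;> ring
  -- norm of N
  have habs : (starRingEnd ℂ) wP * wP = ((‖wP‖ ^ 2 : ℝ) : ℂ) := by
    rw [mul_comm, Complex.mul_conj, Complex.sq_norm]
  have habs2 : wP * (starRingEnd ℂ) wP = ((‖wP‖ : ℝ) : ℂ) ^ 2 := by
    rw [Complex.mul_conj, ← Complex.sq_norm]; push_cast; ring
  have hNN : Nᴴ * N = ((‖wP‖ ^ 2 : ℝ) : ℂ) • (1 : Matrix (Fin 2) (Fin 2) ℂ) := by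
    ext i j
    fin_cases i <;> fin_cases j <;>
      simp [hN, Matrix.mul_apply, Fin.sum_univ_two, Matrix.one_apply, habs, habs2] <;> ring
  have hNle : opNorm2 N ≤ ‖wP‖ := by
    have h := opNorm2_cstar N
    rw [hNN, opNorm2_smul, opNorm2_one, mul_one, Complex.norm_real, Real.norm_eq_abs, _root_.abs_of_nonneg
      (by positivity : (0:ℝ) ≤ ‖wP‖ ^ 2)] at h
    nlinarith [opNorm2_nonneg N, norm_nonneg wP]
  -- explicit inverse
  have hpp : (starRingEnd ℂ) p * p = ((Complex.normSq p : ℝ) : ℂ) := by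
    rw [mul_comm, Complex.mul_conj]
  have hqq : (starRingEnd ℂ) q * q = ((Complex.normSq q : ℝ) : ℂ) := by
    rw [mul_comm, Complex.mul_conj]
  have hsub : ((Complex.normSq p : ℝ) : ℂ) - ((Complex.normSq q : ℝ) : ℂ) = 1 := by
    rw [← Complex.ofReal_sub, hnsq, Complex.ofReal_one]
  have hPi : P⁻¹ = !![(starRingEnd ℂ) p, -q; -((starRingEnd ℂ) q), p] := by
    apply Matrix.inv_eq_right_inv
    rw [hP]
    ext i j
    fin_cases i <;> fin_cases j <;>
      simp [Matrix.mul_apply, Fin.sum_univ_two, Matrix.one_apply, hpp, hqq,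
        Complex.mul_conj] <;>
      first
        | linear_combination hsub
        | ring
  -- ‖P⁻¹‖ ≤ ‖P‖ via P⁻¹ = J Pᴴ J
  set J : Matrix (Fin 2) (Fin 2) ℂ := !![1, 0; 0, -1] with hJ
  have hJJ : Jᴴ * J = 1 := by
    ext i j
    fin_cases i <;> fin_cases j <;>
      simp [hJ, Matrix.mul_apply, Fin.sum_univ_two, Matrix.one_apply]
  have hJle : opNorm2 J ≤ 1 := by
    have h := opNorm2_cstar J
    rw [hJJ, opNorm2_one] at h
    nlinarith [opNorm2_nonneg J]
  have hPiJ : P⁻¹ = J * Pᴴ * J := by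
    rw [hPi, hP]
    ext i j
    fin_cases i <;> fin_cases j <;>
      simp [hJ, Matrix.mul_apply, Fin.sum_univ_two, Matrix.conjTranspose_apply,
        Matrix.vecMul, dotProduct, Matrix.vecHead, Matrix.vecTail]
  have hPH := opNorm2_conjTranspose P
  have hPinv_le : opNorm2 P⁻¹ ≤ opNorm2 P := by
    rw [hPiJ]
    calc opNorm2 (J * Pᴴ * J)
        ≤ opNorm2 (J * Pᴴ) * opNorm2 J := opNorm2_mul_le _ _
      _ ≤ (opNorm2 J * opNorm2 Pᴴ) * opNorm2 J :=
          mul_le_mul_of_nonneg_right (opNorm2_mul_le _ _) (opNorm2_nonneg J)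
      _ = (opNorm2 J * opNorm2 J) * opNorm2 Pᴴ := by ring
      _ ≤ 1 * opNorm2 Pᴴ := by
          have hx := opNorm2_nonneg J
          exact mul_le_mul_of_nonneg_right (by nlinarith) (opNorm2_nonneg Pᴴ)
      _ = opNorm2 P := by rw [one_mul, hPH]
  set K : ℝ := opNorm2 P with hKdef
  have hK1 : 1 ≤ K * K := by
    have h := opNorm2_mul_le P⁻¹ P
    rw [h1, opNorm2_one] at h
    nlinarith [opNorm2_nonneg P⁻¹, hPinv_le, opNorm2_nonneg P]
  have hKpos : 0 < K := by nlinarith [opNorm2_nonneg P]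
  -- |c| ≤ 2|ρ|
  have hcrepr : c = ((2 * Real.sin ρ : ℝ) : ℂ) * Complex.I := by
    rw [hc, mul_comm Complex.I ((ρ : ℝ) : ℂ)]
    have h3 : -(((ρ : ℝ) : ℂ) * Complex.I) = ((-ρ : ℝ) : ℂ) * Complex.I := by
      push_cast; ring
    rw [h3, Complex.exp_mul_I, Complex.exp_mul_I]
    push_cast [Complex.cos_neg, Complex.sin_neg]
    ring
  have hcle : ‖c‖ ≤ 2 * |ρ| := by
    rw [hcrepr]
    rw [norm_mul, Complex.norm_I, mul_one, Complex.norm_real, Real.norm_eq_abs, abs_mul,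
      _root_.abs_two]
    nlinarith [Real.abs_sin_le_abs (x := ρ), abs_nonneg ρ]
  -- main norm estimate
  have hMle : opNorm2 (A * W - W * A) ≤ 2 * |ρ| * (K * K) * ‖wP‖ := by
    rw [hM, hDV]
    calc opNorm2 (P⁻¹ * (c • N) * P)
        ≤ opNorm2 (P⁻¹ * (c • N)) * opNorm2 P := opNorm2_mul_le _ _
      _ ≤ (opNorm2 P⁻¹ * opNorm2 (c • N)) * opNorm2 P :=
          mul_le_mul_of_nonneg_right (opNorm2_mul_le _ _) (opNorm2_nonneg P)
      _ = (opNorm2 P⁻¹ * (‖c‖ * opNorm2 N)) * opNorm2 P := by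
          rw [opNorm2_smul]
      _ ≤ (K * ((2 * |ρ|) * ‖wP‖)) * K := by
          have h4 : ‖c‖ * opNorm2 N ≤ (2 * |ρ|) * ‖wP‖ :=
            mul_le_mul hcle hNle (opNorm2_nonneg N) (by positivity)
          have h5 : opNorm2 P⁻¹ * (‖c‖ * opNorm2 N)
              ≤ K * ((2 * |ρ|) * ‖wP‖) :=
            mul_le_mul hPinv_le h4
              (mul_nonneg (norm_nonneg c) (opNorm2_nonneg N)) hKpos.le
          exact mul_le_mul_of_nonneg_right h5 hKpos.le
      _ = 2 * |ρ| * (K * K) * ‖wP‖ := by ring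
  rw [ge_iff_le]
  have hρpos : (0 : ℝ) < |ρ| := abs_pos.mpr hρ
  calc (1 / 2) * |ρ|⁻¹ * (K ^ 2)⁻¹ * opNorm2 (A * W - W * A)
      ≤ (1 / 2) * |ρ|⁻¹ * (K ^ 2)⁻¹ * (2 * |ρ| * (K * K) * ‖wP‖) := by
        apply mul_le_mul_of_nonneg_left hMle (by positivity)
    _ = ‖wP‖ := by
        field_simp
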